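/- For every typed DAG task G, the NEW-B-2 bound is at most the NEW-B-1 bound: max_{π} [ len(π) + Σ_{s} Σ_{v∈ivs(π,s)} c(v)/M_s ] ≤ len(Ĝ) + Σ_{s} vol_s(G)/M_s. -/

import Mathlib

open MeasureTheory

namespace TypedSched

/-- A typed DAG task: directed edges `E`, type function `γ`, WCET function `c`,
and designated source and sink vertices. -/
structure TypedDAG (V S : Type) where
  E : V → V → Prop
  γ : V → S
  c : V → ℝ
  src : V
  snk : V

variable {V S : Type}

/-- Strict ancestors of `v`. -/
def anc (G : TypedDAG V S) (v : V) : Set V := {u | Relation.TransGen G.E u v}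

/-- Strict descendants of `v`. -/
def des (G : TypedDAG V S) (v : V) : Set V := {u | Relation.TransGen G.E v u}

/-- `par v`: vertices of the same type as `v` that are neither ancestors nor
descendants of `v` (and distinct from `v`). -/
def par (G : TypedDAG V S) (v : V) : Set V :=
  {u | u ≠ v ∧ G.γ u = G.γ v ∧ u ∉ anc G v ∧ u ∉ des G v}

def Acyclic (G : TypedDAG V S) : Prop := ∀ v, ¬ Relation.TransGen G.E v v

def WeightsNonneg (G : TypedDAG V S) : Prop := ∀ v, 0 ≤ G.c v

def IsPath (G : TypedDAG V S) (π : List V) : Prop := π ≠ [] ∧ π.Chain' G.E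

/-- A complete path goes from the source to the sink. -/
def IsCompletePath (G : TypedDAG V S) (π : List V) : Prop :=
  IsPath G π ∧ π.head? = some G.src ∧ π.getLast? = some G.snk

/-- Length of a path: total WCET of its vertices. -/
def len (G : TypedDAG V S) (π : List V) : ℝ := (π.map G.c).sum

/-- `len(G)`: length of the longest complete path. -/
noncomputable def lenG (G : TypedDAG V S) : ℝ :=
  sSup {x : ℝ | ∃ π : List V, IsCompletePath G π ∧ x = len G π}

/-- The scaled graph `Ĝ` with `ĉ(v) = c(v)·(1 − 1/M_{γ(v)})`. -/
noncomputable def scaled (G : TypedDAG V S) (M : S → ℕ) : TypedDAG V S :=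
  { G with c := fun v => G.c v * (1 - 1 / (M (G.γ v) : ℝ)) }

/-- `vol_s(G)`: total WCET of type-`s` vertices. -/
noncomputable def vol (G : TypedDAG V S) (s : S) : ℝ := ∑ᶠ v ∈ {v : V | G.γ v = s}, G.c v

/-- `ivs(π, s)`: interference set of the path `π` for type `s`. -/
def ivs (G : TypedDAG V S) (π : List V) (s : S) : Set V :=
  ⋃ τ ∈ {τ : V | τ ∈ π ∧ G.γ τ = s}, par G τ

/-- Sum of WCETs of type-`s` vertices on a path. -/
def pathTypeSum [DecidableEq S] (G : TypedDAG V S) (π : List V) (s : S) : ℝ :=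
  ((π.filter (fun v => decide (G.γ v = s))).map G.c).sum

/-- The NEW-B-1 bound. -/
noncomputable def newB1 [Fintype S] (G : TypedDAG V S) (M : S → ℕ) : ℝ :=
  lenG (scaled G M) + ∑ s : S, vol G s / (M s : ℝ)

/-- The OLD-B bound. -/
noncomputable def oldB [Fintype S] (G : TypedDAG V S) (M : S → ℕ) : ℝ :=
  (1 - 1 / ((Finset.univ.sup M : ℕ) : ℝ)) * lenG G + ∑ s : S, vol G s / (M s : ℝ)

/-- Per-path bound `R̃(π)` used by NEW-B-2. -/
noncomputable def Rtilde [Fintype S] (G : TypedDAG V S) (M : S → ℕ) (π : List V) : ℝ :=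
  len G π + ∑ s : S, (∑ᶠ v ∈ ivs G π s, G.c v) / (M s : ℝ)

/-- The NEW-B-2 bound. -/
noncomputable def newB2 [Fintype S] (G : TypedDAG V S) (M : S → ℕ) : ℝ :=
  sSup {x : ℝ | ∃ π : List V, IsCompletePath G π ∧ x = Rtilde G M π}

/-- An execution sequence of `G` under a work-conserving scheduler on a platform
with `M s` cores of each type `s`.  `exec v` is the set of time instants at which
`v` executes, and `f v` is its finish time. -/
structure ExecSeq (G : TypedDAG V S) (M : S → ℕ) where
  exec : V → Set ℝ
  f : V → ℝ
  meas : ∀ v, MeasurableSet (exec v)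
  /-- each vertex executes for at most its WCET -/
  dur_le : ∀ v, (volume (exec v)).toReal ≤ G.c v
  exec_nonneg : ∀ v, exec v ⊆ Set.Ici 0
  exec_lt_finish : ∀ v, exec v ⊆ Set.Iio (f v)
  f_nonneg : ∀ v, 0 ≤ f v
  /-- precedence: a vertex may execute only after all its predecessors finished -/
  prec : ∀ u v, G.E u v → exec v ⊆ Set.Ici (f u)
  /-- at any instant at most `M s` vertices of type `s` are executing -/
  cores : ∀ (s : S) (t : ℝ), {v : V | G.γ v = s ∧ t ∈ exec v}.ncard ≤ M s
  /-- work conservation: if an eligible unfinished vertex does not execute at `t`,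
  all cores of its type are busy -/
  work_conserving : ∀ (v : V) (t : ℝ), 0 ≤ t → t < f v →
    (∀ u, G.E u v → f u ≤ t) → t ∉ exec v →
    {u : V | G.γ u = G.γ v ∧ t ∈ exec u}.ncard = M (G.γ v)

/-- A critical path: a complete path on which each vertex is a
latest-finishing predecessor of the next one. -/
def IsCriticalPath (G : TypedDAG V S) {M : S → ℕ} (ex : ExecSeq G M) (π : List V) : Prop :=
  IsCompletePath G π ∧
  ∀ p ∈ π.zip π.tail, ∀ w, G.E w p.2 → ex.f w ≤ ex.f p.1

/-- `X_s`: total time during which type-`s` critical-path vertices execute inside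
their windows (the window of `τ_i` is `[f(τ_{i-1}), f(τ_i))`, with `f(τ_0) = 0`). -/
noncomputable def Xs [DecidableEq S] (G : TypedDAG V S) {M : S → ℕ} (ex : ExecSeq G M)
    (π : List V) (s : S) : ℝ :=
  ((π.zip ((0:ℝ) :: π.map ex.f)).map fun p =>
    if G.γ p.1 = s then (volume (ex.exec p.1 ∩ Set.Ico p.2 (ex.f p.1))).toReal else 0).sum

/-- `Y_s`: total time during which type-`s` critical-path vertices are not executing
inside their windows. -/
noncomputable def Ys [DecidableEq S] (G : TypedDAG V S) {M : S → ℕ} (ex : ExecSeq G M)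
    (π : List V) (s : S) : ℝ :=
  ((π.zip ((0:ℝ) :: π.map ex.f)).map fun p =>
    if G.γ p.1 = s then (volume ((Set.Ico p.2 (ex.f p.1)) \ ex.exec p.1)).toReal else 0).sum


section Aux

variable {V S : Type}

open Classical in
lemma path_nodup (G : TypedDAG V S) (hacyc : Acyclic G) {π : List V}
    (h : π.Chain' G.E) : π.Nodup := by
  have h2 : π.Chain' (Relation.TransGen G.E) :=
    List.IsChain.imp (fun a b hab => Relation.TransGen.single hab) h
  have : IsTrans V (Relation.TransGen G.E) := ⟨fun a b c => Relation.TransGen.trans⟩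
  have hp : π.Pairwise (Relation.TransGen G.E) := List.isChain_iff_pairwise.mp h2
  exact hp.imp (fun {a b} hab e => by subst e; exact hacyc a hab)

open Classical in
lemma path_comparable (G : TypedDAG V S) {π : List V}
    (h : π.Chain' G.E) {u v : V} (hu : u ∈ π) (hv : v ∈ π) (hne : u ≠ v) :
    Relation.TransGen G.E u v ∨ Relation.TransGen G.E v u := by
  have h2 : π.Chain' (Relation.TransGen G.E) :=
    List.IsChain.imp (fun a b hab => Relation.TransGen.single hab) h
  have : IsTrans V (Relation.TransGen G.E) := ⟨fun a b c => Relation.TransGen.trans⟩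
  have hp : π.Pairwise (Relation.TransGen G.E) := List.isChain_iff_pairwise.mp h2
  have hp' : π.Pairwise (fun a b => Relation.TransGen G.E a b ∨ Relation.TransGen G.E b a) :=
    hp.imp (fun {a b} hab => Or.inl hab)
  have : Std.Symm (fun a b => Relation.TransGen G.E a b ∨ Relation.TransGen G.E b a) :=
    ⟨fun a b hab => hab.symm⟩
  exact List.Pairwise.forall hp' hu hv hne

end Aux

/-- NEW-B-2 is always at most NEW-B-1. -/
theorem stmt8 {V S : Type} [Fintype V] [Fintype S]
    (G : TypedDAG V S) (M : S → ℕ) (hM : ∀ s, 1 ≤ M s)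
    (hc : WeightsNonneg G) (hacyc : Acyclic G) :
    newB2 G M ≤ newB1 G M := by
  classical
  have hMpos : ∀ s, (0:ℝ) < (M s : ℝ) := fun s => by
    exact_mod_cast Nat.lt_of_lt_of_le Nat.zero_lt_one (hM s)
  have hscaled_nonneg : ∀ v, 0 ≤ (scaled G M).c v := by
    intro v
    have h1 : (1:ℝ) ≤ (M (G.γ v) : ℝ) := by exact_mod_cast hM _
    have h2 : 1/(M (G.γ v):ℝ) ≤ 1 := by
      rw [div_le_one (by linarith)]; exact h1
    exact mul_nonneg (hc v) (by linarith)
  have hvolF : ∀ s, vol G s = ∑ v ∈ Finset.univ.filter (fun v => G.γ v = s), G.c v := by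
    intro s
    rw [vol, ← finsum_mem_coe_finset]
    congr 1
    ext v; simp
  have hvol_nonneg : ∀ s, 0 ≤ vol G s := by
    intro s; rw [hvolF s]; exact Finset.sum_nonneg (fun v _ => hc v)
  have hsum_nonneg : 0 ≤ ∑ s, vol G s / (M s : ℝ) :=
    Finset.sum_nonneg (fun s _ => div_nonneg (hvol_nonneg s) (hMpos s).le)
  have hub : ∀ x ∈ {x : ℝ | ∃ π : List V, IsCompletePath (scaled G M) π ∧
      x = len (scaled G M) π}, x ≤ ∑ v : V, (scaled G M).c v := by
    rintro x ⟨π, hπ, rfl⟩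
    have hnd : π.Nodup := path_nodup (scaled G M) hacyc hπ.1.2
    rw [len, ← List.sum_toFinset _ hnd]
    exact Finset.sum_le_sum_of_subset_of_nonneg (Finset.subset_univ _)
      (fun v _ _ => hscaled_nonneg v)
  have hbdd : BddAbove {x : ℝ | ∃ π : List V, IsCompletePath (scaled G M) π ∧
      x = len (scaled G M) π} := ⟨_, hub⟩
  have hlenG0 : 0 ≤ lenG (scaled G M) := by
    apply Real.sSup_nonneg
    rintro x ⟨π, hπ, rfl⟩
    exact List.sum_nonneg (by simpa using fun v _ => hscaled_nonneg v)
  apply Real.sSup_le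
  · rintro x ⟨π, hπ, rfl⟩
    have hnd : π.Nodup := path_nodup G hacyc hπ.1.2
    set T := π.toFinset with hT
    have hlen : len G π = ∑ v ∈ T, G.c v := (List.sum_toFinset _ hnd).symm
    have hpts : ∀ s, pathTypeSum G π s = ∑ v ∈ T.filter (fun v => G.γ v = s), G.c v := by
      intro s
      rw [pathTypeSum, ← List.sum_toFinset _ (hnd.filter _), List.toFinset_filter]
      congr 1
      ext v; simp [hT]
    have hivs : ∀ s, (∑ᶠ v ∈ ivs G π s, G.c v) ≤ vol G s - pathTypeSum G π s := by
      intro s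
      have hsub : (ivs G π s).toFinset ⊆
          (Finset.univ.filter (fun v => G.γ v = s)) \ (T.filter (fun v => G.γ v = s)) := by
        intro u hu
        rw [Set.mem_toFinset] at hu
        simp only [ivs, Set.mem_iUnion, Set.mem_setOf_eq] at hu
        obtain ⟨τ, ⟨hτπ, hτs⟩, hupar⟩ := hu
        obtain ⟨hne, hty, hnanc, hndes⟩ := hupar
        rw [Finset.mem_sdiff]
        constructor
        · simp [hty, hτs]
        · simp only [Finset.mem_filter, not_and, hT, List.mem_toFinset]
          intro huπ
          rcases path_comparable G hπ.1.2 huπ hτπ hne with h | h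
          · exact absurd h hnanc
          · exact absurd h hndes
      have hkey : ∑ v ∈ (ivs G π s).toFinset, G.c v ≤
          ∑ v ∈ (Finset.univ.filter (fun v => G.γ v = s)) \ (T.filter (fun v => G.γ v = s)),
            G.c v :=
        Finset.sum_le_sum_of_subset_of_nonneg hsub (fun v _ _ => hc v)
      rw [Finset.sum_sdiff_eq_sub
        (Finset.filter_subset_filter _ (Finset.subset_univ T))] at hkey
      have hrw : (∑ᶠ v ∈ ivs G π s, G.c v) = ∑ v ∈ (ivs G π s).toFinset, G.c v := by
        rw [← finsum_mem_coe_finset]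
        congr 1
        simp
      rw [hrw, hvolF s, hpts s]
      exact hkey
    have hsplit : len (scaled G M) π = len G π - ∑ s, pathTypeSum G π s / (M s : ℝ) := by
      have h1 : len (scaled G M) π = ∑ v ∈ T, G.c v - ∑ v ∈ T, G.c v / (M (G.γ v) : ℝ) := by
        rw [len, ← List.sum_toFinset _ hnd, ← Finset.sum_sub_distrib]
        apply Finset.sum_congr rfl
        intro v _
        have : (M (G.γ v) : ℝ) ≠ 0 := (hMpos _).ne'
        simp only [scaled]
        field_simp
      have h2 : ∑ v ∈ T, G.c v / (M (G.γ v) : ℝ) = ∑ s, pathTypeSum G π s / (M s : ℝ) := by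
        rw [← Finset.sum_fiberwise T (fun v => G.γ v) (fun v => G.c v / (M (G.γ v) : ℝ))]
        apply Finset.sum_congr rfl
        intro s _
        rw [hpts s, Finset.sum_div]
        apply Finset.sum_congr rfl
        intro v hv
        rw [(Finset.mem_filter.mp hv).2]
      rw [h1, h2, hlen]
    have hle : len (scaled G M) π ≤ lenG (scaled G M) :=
      le_csSup hbdd ⟨π, hπ, rfl⟩
    have hstep : ∑ s, (∑ᶠ v ∈ ivs G π s, G.c v) / (M s : ℝ) ≤
        ∑ s, (vol G s - pathTypeSum G π s) / (M s : ℝ) :=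
      Finset.sum_le_sum (fun s _ => (div_le_div_iff_of_pos_right (hMpos s)).mpr (hivs s))
    have hrw2 : ∑ s, (vol G s - pathTypeSum G π s) / (M s : ℝ) =
        ∑ s, vol G s / (M s : ℝ) - ∑ s, pathTypeSum G π s / (M s : ℝ) := by
      rw [← Finset.sum_sub_distrib]
      exact Finset.sum_congr rfl (fun s _ => sub_div _ _ _)
    rw [Rtilde, newB1]
    rw [hrw2] at hstep
    linarith
  · rw [newB1]
    linarith

end TypedSched
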